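/- For the τ-nice sampling, Assumption (A,B) holds with A = n(n−τ)/(τ(n−1)) and B = n(τ−1)/(τ(n−1)); i.e., for all a_1,...,a_n ∈ R^d, E_{S∼P}[‖Σ_{i∈S} a_i/p_i‖²] ≤ A Σ_{i=1}^n ‖a_i‖² + B ‖Σ_{i=1}^n a_i‖². -/

import Mathlib

open Finset

noncomputable section

lemma count_subsets {α : Type*} [DecidableEq α] (s t : Finset α) (ht : t ⊆ s) (k : ℕ)
    (hk : t.card ≤ k) :
    ((s.powersetCard k).filter (fun S => t ⊆ S)).card
      = (s.card - t.card).choose (k - t.card) := by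
  rw [← card_sdiff_of_subset ht, ← card_powersetCard (k - t.card) (s \ t)]
  apply Finset.card_nbij' (fun S => S \ t) (fun T => T ∪ t)
  · intro S hS
    simp only [mem_coe, mem_filter, mem_powersetCard] at hS
    obtain ⟨⟨hSs, hSc⟩, htS⟩ := hS
    simp only [mem_coe, mem_powersetCard]
    exact ⟨sdiff_subset_sdiff hSs (le_refl t), by rw [card_sdiff_of_subset htS, hSc]⟩
  · intro T hT
    simp only [mem_coe, mem_powersetCard] at hT
    obtain ⟨hTs, hTc⟩ := hT
    simp only [mem_coe, mem_filter, mem_powersetCard]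
    refine ⟨⟨union_subset (hTs.trans (sdiff_subset)) ht, ?_⟩, subset_union_right⟩
    rw [card_union_of_disjoint (Finset.sdiff_disjoint.mono_left hTs), hTc]
    omega
  · intro S hS
    simp only [mem_coe, mem_filter, mem_powersetCard] at hS
    exact sdiff_union_of_subset hS.2
  · intro T hT
    simp only [mem_coe, mem_powersetCard] at hT
    exact union_sdiff_cancel_right (Finset.sdiff_disjoint.mono_left hT.1)

lemma key_expand {n τ : ℕ} {E : Type*} [NormedAddCommGroup E] [InnerProductSpace ℝ E]
    (a : Fin n → E) (c1 c2 : ℕ)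
    (h1 : ∀ i : Fin n, (((univ : Finset (Fin n)).powersetCard τ).filter
        (fun S => i ∈ S)).card = c1)
    (h2 : ∀ i j : Fin n, i ≠ j → (((univ : Finset (Fin n)).powersetCard τ).filter
        (fun S => i ∈ S ∧ j ∈ S)).card = c2) :
    ∑ S ∈ (univ : Finset (Fin n)).powersetCard τ, ‖∑ i ∈ S, a i‖ ^ 2
      = ((c1 : ℝ) - c2) * ∑ i, ‖a i‖ ^ 2 + (c2 : ℝ) * ‖∑ i, a i‖ ^ 2 := by
  have expand : ∀ S : Finset (Fin n), ‖∑ i ∈ S, a i‖ ^ 2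
      = ∑ i, ∑ j, (if i ∈ S ∧ j ∈ S then (inner ℝ (a i) (a j) : ℝ) else 0) := by
    intro S
    rw [← real_inner_self_eq_norm_sq, sum_inner]
    have : ∀ i : Fin n, (inner ℝ (a i) (∑ j ∈ S, a j) : ℝ) = ∑ j ∈ S, inner ℝ (a i) (a j) :=
      fun i => inner_sum S a (a i)
    calc ∑ i ∈ S, (inner ℝ (a i) (∑ j ∈ S, a j) : ℝ)
        = ∑ i ∈ S, ∑ j ∈ S, (inner ℝ (a i) (a j) : ℝ) := by
          exact Finset.sum_congr rfl fun i _ => this i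
      _ = ∑ i, ∑ j, (if i ∈ S ∧ j ∈ S then (inner ℝ (a i) (a j) : ℝ) else 0) := by
          rw [← Finset.sum_subset (subset_univ S)]
          · refine Finset.sum_congr rfl fun i hi => ?_
            rw [← Finset.sum_subset (subset_univ S)]
            · exact Finset.sum_congr rfl fun j hj => by simp [hi, hj]
            · intro j _ hj; simp [hj]
          · intro i _ hi
            refine Finset.sum_eq_zero fun j _ => by simp [hi]
  calc ∑ S ∈ (univ : Finset (Fin n)).powersetCard τ, ‖∑ i ∈ S, a i‖ ^ 2
      = ∑ S ∈ (univ : Finset (Fin n)).powersetCard τ, ∑ i, ∑ j,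
          (if i ∈ S ∧ j ∈ S then (inner ℝ (a i) (a j) : ℝ) else 0) :=
        Finset.sum_congr rfl fun S _ => expand S
    _ = ∑ i, ∑ j, ∑ S ∈ (univ : Finset (Fin n)).powersetCard τ,
          (if i ∈ S ∧ j ∈ S then (inner ℝ (a i) (a j) : ℝ) else 0) := by
        rw [Finset.sum_comm]
        exact Finset.sum_congr rfl fun i _ => Finset.sum_comm
    _ = ∑ i, ∑ j, ((((univ : Finset (Fin n)).powersetCard τ).filter
          (fun S => i ∈ S ∧ j ∈ S)).card : ℝ) * (inner ℝ (a i) (a j) : ℝ) := by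
        refine Finset.sum_congr rfl fun i _ => Finset.sum_congr rfl fun j _ => ?_
        rw [← Finset.sum_filter, Finset.sum_const, nsmul_eq_mul]
    _ = ∑ i, ∑ j, ((c2 : ℝ) * (inner ℝ (a i) (a j) : ℝ)
          + if i = j then ((c1 : ℝ) - c2) * (inner ℝ (a i) (a j) : ℝ) else 0) := by
        refine Finset.sum_congr rfl fun i _ => Finset.sum_congr rfl fun j _ => ?_
        by_cases h : i = j
        · subst h
          have : (((univ : Finset (Fin n)).powersetCard τ).filter
              (fun S => i ∈ S ∧ i ∈ S)).card = c1 := by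
            rw [← h1 i]; congr 1; simp
          rw [this]; simp; ring
        · rw [h2 i j h]; simp [h]
    _ = ((c1 : ℝ) - c2) * ∑ i, ‖a i‖ ^ 2 + (c2 : ℝ) * ‖∑ i, a i‖ ^ 2 := by
        simp_rw [Finset.sum_add_distrib, ← Finset.mul_sum, Finset.sum_ite_eq, if_pos (mem_univ _)]
        have e1 : ∑ i, ∑ j, (inner ℝ (a i) (a j) : ℝ) = ‖∑ i, a i‖ ^ 2 := by
          rw [← real_inner_self_eq_norm_sq, sum_inner]
          exact Finset.sum_congr rfl fun i _ => (inner_sum univ a (a i)).symm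
        have e2 : ∀ x : Fin n, (inner ℝ (a x) (a x) : ℝ) = ‖a x‖ ^ 2 :=
          fun x => real_inner_self_eq_norm_sq (a x)
        rw [e1]
        simp_rw [e2]
        rw [← Finset.mul_sum]
        ring

theorem stmt2 {d n τ : ℕ} (hn : 2 ≤ n) (hτ1 : 1 ≤ τ) (hτn : τ ≤ n)
    (a : Fin n → EuclideanSpace ℝ (Fin d)) :
    ∑ S : Finset (Fin n),
        (if S.card = τ then ((n.choose τ : ℝ))⁻¹ else 0) *
          ‖∑ i ∈ S, ((τ : ℝ) / (n : ℝ))⁻¹ • a i‖ ^ 2 ≤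
      ((n : ℝ) * ((n : ℝ) - (τ : ℝ))) / ((τ : ℝ) * ((n : ℝ) - 1)) * ∑ i, ‖a i‖ ^ 2 +
      ((n : ℝ) * ((τ : ℝ) - 1)) / ((τ : ℝ) * ((n : ℝ) - 1)) * ‖∑ i, a i‖ ^ 2 := by
  set c1 : ℕ := (n-1).choose (τ-1) with hc1def
  set c2 : ℕ := if 2 ≤ τ then (n-2).choose (τ-2) else 0 with hc2def
  have h1 : ∀ i : Fin n, (((univ : Finset (Fin n)).powersetCard τ).filter
      (fun S => i ∈ S)).card = c1 := by
    intro i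
    have h := count_subsets (univ : Finset (Fin n)) {i} (subset_univ _) τ (by simpa using hτ1)
    simpa [card_univ] using h
  have h2 : ∀ i j : Fin n, i ≠ j → (((univ : Finset (Fin n)).powersetCard τ).filter
      (fun S => i ∈ S ∧ j ∈ S)).card = c2 := by
    intro i j hij
    by_cases hτ2 : 2 ≤ τ
    · have hcard : ({i, j} : Finset (Fin n)).card = 2 := card_pair hij
      have h := count_subsets (univ : Finset (Fin n)) {i, j} (subset_univ _) τ
        (by rw [hcard]; exact hτ2)
      rw [hc2def, if_pos hτ2]
      rw [hcard, card_univ, Fintype.card_fin] at h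
      rw [← h]
      congr 1
      ext S
      simp [insert_subset_iff]
    · rw [hc2def, if_neg hτ2]
      rw [Finset.card_eq_zero, Finset.filter_eq_empty_iff]
      intro S hS
      rintro ⟨hiS, hjS⟩
      rw [mem_powersetCard] at hS
      have : 1 < S.card := Finset.one_lt_card.2 ⟨i, hiS, j, hjS, hij⟩
      omega
  have hA : n * c1 = τ * n.choose τ := by
    have h := Nat.add_one_mul_choose_eq (n - 1) (τ - 1)
    rw [Nat.sub_add_cancel (by omega : 1 ≤ n), Nat.sub_add_cancel hτ1] at h
    rw [hc1def, h, Nat.mul_comm]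
  have hB : (n - 1) * c2 = (τ - 1) * c1 := by
    by_cases hτ2 : 2 ≤ τ
    · have h := Nat.add_one_mul_choose_eq (n - 2) (τ - 2)
      rw [show n - 2 + 1 = n - 1 by omega, show τ - 2 + 1 = τ - 1 by omega] at h
      rw [hc2def, if_pos hτ2, hc1def, h, Nat.mul_comm]
    · have hτe : τ = 1 := by omega
      rw [hc2def, if_neg hτ2, hτe]
      simp
  -- real facts
  have hτ0 : (0:ℝ) < τ := by exact_mod_cast hτ1
  have hn1 : (1:ℝ) < n := by exact_mod_cast hn
  have hC : (0:ℝ) < n.choose τ := by exact_mod_cast Nat.choose_pos hτn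
  have hAR : (n:ℝ) * c1 = τ * n.choose τ := by exact_mod_cast hA
  have hBR : ((n:ℝ) - 1) * c2 = ((τ:ℝ) - 1) * c1 := by
    have h := congrArg (Nat.cast : ℕ → ℝ) hB
    push_cast [Nat.cast_sub (show 1 ≤ n by omega), Nat.cast_sub hτ1] at h
    exact h
  have hc1R : (c1:ℝ) = τ * n.choose τ / n := by
    rw [eq_div_iff (by positivity)]; linarith [hAR]
  have hc2R : (c2:ℝ) = τ * ((τ:ℝ) - 1) * n.choose τ / ((n:ℝ) * ((n:ℝ) - 1)) := by
    rw [eq_div_iff (by nlinarith)]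
    nlinarith [hBR, hc1R, hAR]
  -- rewrite the sum
  have hsum : ∀ S : Finset (Fin n), ‖∑ i ∈ S, ((τ:ℝ)/(n:ℝ))⁻¹ • a i‖ ^ 2
      = ((n:ℝ)/τ)^2 * ‖∑ i ∈ S, a i‖^2 := by
    intro S
    rw [← Finset.smul_sum, norm_smul, mul_pow]
    congr 2
    rw [Real.norm_eq_abs, abs_of_nonneg (by positivity), inv_div]
  have hset : (univ : Finset (Fin n)).powersetCard τ
      = univ.filter (fun S : Finset (Fin n) => S.card = τ) := by
    ext S; simp [mem_powersetCard]
  have step1 : (∑ S : Finset (Fin n),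
        (if S.card = τ then ((n.choose τ : ℝ))⁻¹ else 0) *
          ‖∑ i ∈ S, ((τ : ℝ) / (n : ℝ))⁻¹ • a i‖ ^ 2)
      = ((n.choose τ : ℝ))⁻¹ * (((n:ℝ)/τ)^2 *
          ∑ S ∈ (univ : Finset (Fin n)).powersetCard τ, ‖∑ i ∈ S, a i‖ ^ 2) := by
    rw [hset, Finset.sum_filter, Finset.mul_sum, Finset.mul_sum]
    refine Finset.sum_congr rfl fun S _ => ?_
    by_cases h : S.card = τ
    · simp only [h, if_pos, if_true]
      rw [hsum S]
    · simp [h]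
  rw [step1, key_expand a c1 c2 h1 h2]
  apply le_of_eq
  rw [hc1R, hc2R]
  have hn0 : (0:ℝ) < n := by linarith
  have hn1' : (0:ℝ) < (n:ℝ) - 1 := by linarith
  field_simp
  ring
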